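/- arXiv:2310.13722 — 2 statements merged into one kernel-verified Lean document; each statement's English description precedes it below -/
import Mathlib

section
/- Let V be a complex vector space equipped with two inner products ⟨·,·⟩₁ and ⟨·,·⟩₂. Suppose the two inner products define the same angles for all pairs of nonzero vectors, i.e., for all nonzero x, y ∈ V, Re⟨x,y⟩₁/(‖x‖₁‖y‖₁) = Re⟨x,y⟩₂/(‖x‖₂‖y‖₂). Then there exists a constant c > 0 such that ⟨x,y⟩₂ = c·⟨x,y⟩₁ for all x, y ∈ V. -/
section Aux

variable {V : Type*} [AddCommGroup V] [Module ℂ V]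

private lemma core_im_self (p : InnerProductSpace.Core ℂ V) (x : V) :
    (p.inner x x).im = 0 := by
  have h2 := congrArg Complex.im (p.conj_inner_symm x x)
  simp only [Complex.conj_im] at h2
  linarith

private lemma core_re_nonneg (p : InnerProductSpace.Core ℂ V) (x : V) :
    0 ≤ (p.inner x x).re := by
  simpa using p.re_inner_nonneg x

private lemma core_re_pos (p : InnerProductSpace.Core ℂ V) {x : V} (hx : x ≠ 0) :
    0 < (p.inner x x).re := by
  rcases lt_or_eq_of_le (core_re_nonneg p x) with h | h
  · exact h
  · exfalso
    apply hx
    apply p.definite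
    apply Complex.ext
    · exact h.symm
    · simpa using core_im_self p x

private lemma core_add_right (p : InnerProductSpace.Core ℂ V) (x y z : V) :
    p.inner x (y + z) = p.inner x y + p.inner x z := by
  rw [← p.conj_inner_symm x (y + z), p.add_left, map_add, p.conj_inner_symm, p.conj_inner_symm]

private lemma core_smul_right (p : InnerProductSpace.Core ℂ V) (x y : V) (r : ℂ) :
    p.inner x (r • y) = r * p.inner x y := by
  rw [← p.conj_inner_symm x (r • y), p.smul_left, map_mul, Complex.conj_conj, p.conj_inner_symm]

private lemma core_real_smul_left (p : InnerProductSpace.Core ℂ V) (x y : V) (a : ℝ) :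
    p.inner ((a : ℂ) • x) y = (a : ℂ) * p.inner x y := by
  rw [p.smul_left, Complex.conj_ofReal]

private lemma core_re_symm (p : InnerProductSpace.Core ℂ V) (x y : V) :
    (p.inner x y).re = (p.inner y x).re := by
  rw [← p.conj_inner_symm y x, Complex.conj_re]

private lemma core_sub_left (p : InnerProductSpace.Core ℂ V) (x y z : V) :
    p.inner (x - y) z = p.inner x z - p.inner y z := by
  have h := p.add_left (x - y) y z
  rw [sub_add_cancel] at h
  linear_combination -h

private lemma core_sub_right (p : InnerProductSpace.Core ℂ V) (x y z : V) :
    p.inner x (y - z) = p.inner x y - p.inner x z := by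
  have h := core_add_right p x (y - z) z
  rw [sub_add_cancel] at h
  linear_combination -h

/-- Expansion of the inner product of `b•x + a•y` with `b•x - a•y`. -/
private lemma core_expand_re (p : InnerProductSpace.Core ℂ V) (x y : V) (a b : ℝ) :
    (p.inner ((b : ℂ) • x + (a : ℂ) • y) ((b : ℂ) • x - (a : ℂ) • y)).re
      = b * b * (p.inner x x).re - a * a * (p.inner y y).re := by
  rw [p.add_left, core_sub_right, core_sub_right, core_real_smul_left, core_real_smul_left,
    core_smul_right, core_smul_right, core_smul_right, core_smul_right,
    core_real_smul_left, core_real_smul_left]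
  have hsym := core_re_symm p x y
  simp only [Complex.sub_re, Complex.add_re, Complex.mul_re, Complex.ofReal_re,
    Complex.ofReal_im, zero_mul, sub_zero, mul_zero]
  linear_combination (-(b * a)) * hsym

/-- Expansion of `⟪x+y, x+y⟫.re`. -/
private lemma core_expand_add_re (p : InnerProductSpace.Core ℂ V) (x y : V) :
    (p.inner (x + y) (x + y)).re
      = (p.inner x x).re + 2 * (p.inner x y).re + (p.inner y y).re := by
  rw [p.add_left, core_add_right, core_add_right]
  have hsym := core_re_symm p x y
  simp only [Complex.add_re]
  linarith

private lemma core_inner_zero_left (p : InnerProductSpace.Core ℂ V) (y : V) :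
    p.inner 0 y = 0 := by
  have h := p.add_left 0 0 y
  rw [add_zero] at h
  linear_combination -h

private lemma core_inner_zero_right (p : InnerProductSpace.Core ℂ V) (x : V) :
    p.inner x 0 = 0 := by
  rw [← p.conj_inner_symm x 0, core_inner_zero_left, map_zero]

private lemma core_re_ofReal_mul (r : ℝ) (z : ℂ) : ((r : ℂ) * z).re = r * z.re := by
  simp [Complex.mul_re]

private lemma core_prop_of_smul_eq (p₁ p₂ : InnerProductSpace.Core ℂ V) (x y : V) (b t : ℝ)
    (hb : b ≠ 0) (hxy : (b : ℂ) • x = (t : ℂ) • y) :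
    (p₂.inner x x).re * (p₁.inner y y).re = (p₂.inner y y).re * (p₁.inner x x).re := by
  have e : ∀ p : InnerProductSpace.Core ℂ V,
      b * b * (p.inner x x).re = t * t * (p.inner y y).re := by
    intro p
    have h1 : p.inner ((b : ℂ) • x) ((b : ℂ) • x) = p.inner ((t : ℂ) • y) ((t : ℂ) • y) := by
      rw [hxy]
    rw [core_real_smul_left, core_smul_right, core_real_smul_left, core_smul_right] at h1
    have h2 := congrArg Complex.re h1
    rw [← mul_assoc, ← Complex.ofReal_mul, ← mul_assoc, ← Complex.ofReal_mul,
      core_re_ofReal_mul, core_re_ofReal_mul] at h2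
    exact h2
  have h3 : (b * b) * ((p₂.inner x x).re * (p₁.inner y y).re
      - (p₂.inner y y).re * (p₁.inner x x).re) = 0 := by
    linear_combination ((p₁.inner y y).re) * (e p₂) - ((p₂.inner y y).re) * (e p₁)
  have hb2 : b * b ≠ 0 := mul_ne_zero hb hb
  rcases mul_eq_zero.mp h3 with h4 | h4
  · exact absurd h4 hb2
  · linarith

private lemma core_ratio (p₁ p₂ : InnerProductSpace.Core ℂ V)
    (h : ∀ x y : V, x ≠ 0 → y ≠ 0 →
      (p₁.inner x y).re / (Real.sqrt (p₁.inner x x).re * Real.sqrt (p₁.inner y y).re) =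
      (p₂.inner x y).re / (Real.sqrt (p₂.inner x x).re * Real.sqrt (p₂.inner y y).re))
    (x y : V) (hx : x ≠ 0) (hy : y ≠ 0) :
    (p₂.inner x x).re * (p₁.inner y y).re = (p₂.inner y y).re * (p₁.inner x x).re := by
  set a := Real.sqrt (p₁.inner x x).re with ha_def
  set b := Real.sqrt (p₁.inner y y).re with hb_def
  have ha : 0 < a := Real.sqrt_pos.mpr (core_re_pos p₁ hx)
  have hb : 0 < b := Real.sqrt_pos.mpr (core_re_pos p₁ hy)
  have ha2 : a * a = (p₁.inner x x).re := Real.mul_self_sqrt (core_re_nonneg p₁ x)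
  have hb2 : b * b = (p₁.inner y y).re := Real.mul_self_sqrt (core_re_nonneg p₁ y)
  set u := (b : ℂ) • x + (a : ℂ) • y with hu_def
  set w := (b : ℂ) • x - (a : ℂ) • y with hw_def
  by_cases hu : u = 0
  · have hxy : (b : ℂ) • x = ((-a : ℝ) : ℂ) • y := by
      push_cast
      rw [neg_smul]
      rw [hu_def] at hu
      linear_combination (norm := module) hu
    exact core_prop_of_smul_eq p₁ p₂ x y b (-a) hb.ne' hxy
  by_cases hw : w = 0
  · have hxy : (b : ℂ) • x = (a : ℂ) • y := by
      rw [hw_def] at hw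
      linear_combination (norm := module) hw
    exact core_prop_of_smul_eq p₁ p₂ x y b a hb.ne' hxy
  · have h1 : (p₁.inner u w).re = 0 := by
      rw [hu_def, hw_def, core_expand_re, ha2, hb2]
      ring
    have hh := h u w hu hw
    rw [h1, zero_div] at hh
    have hd : Real.sqrt (p₂.inner u u).re * Real.sqrt (p₂.inner w w).re ≠ 0 :=
      (mul_pos (Real.sqrt_pos.mpr (core_re_pos p₂ hu))
        (Real.sqrt_pos.mpr (core_re_pos p₂ hw))).ne'
    have h2 : (p₂.inner u w).re = 0 := by
      rcases div_eq_zero_iff.mp hh.symm with h4 | h4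
      · exact h4
      · exact absurd h4 hd
    rw [hu_def, hw_def, core_expand_re] at h2
    rw [← ha2, ← hb2]
    nlinarith [h2]

end Aux

/-- Two complex inner products defining the same (Euclidean) angles for all pairs of
nonzero vectors are conformal. -/
theorem stmt_12 {V : Type*} [AddCommGroup V] [Module ℂ V]
    (p₁ p₂ : InnerProductSpace.Core ℂ V)
    (h : ∀ x y : V, x ≠ 0 → y ≠ 0 →
      (p₁.inner x y).re / (Real.sqrt (p₁.inner x x).re * Real.sqrt (p₁.inner y y).re) =
      (p₂.inner x y).re / (Real.sqrt (p₂.inner x x).re * Real.sqrt (p₂.inner y y).re)) :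
    ∃ c : ℝ, 0 < c ∧ ∀ x y : V, p₂.inner x y = (c : ℂ) * p₁.inner x y := by
  by_cases hV : ∀ v : V, v = 0
  · refine ⟨1, one_pos, fun x y => ?_⟩
    rw [hV x, core_inner_zero_left, core_inner_zero_left, mul_zero]
  · push_neg at hV
    obtain ⟨v, hv⟩ := hV
    set c : ℝ := (p₂.inner v v).re / (p₁.inner v v).re with hc_def
    have hc : 0 < c := div_pos (core_re_pos p₂ hv) (core_re_pos p₁ hv)
    have hnorm : ∀ x : V, (p₂.inner x x).re = c * (p₁.inner x x).re := by
      intro x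
      by_cases hx : x = 0
      · rw [hx, core_inner_zero_left, core_inner_zero_left]
        simp
      · have h1 := core_ratio p₁ p₂ h x v hx hv
        have h2 := (core_re_pos p₁ hv).ne'
        rw [hc_def]
        field_simp
        linarith
    have hre : ∀ x y : V, (p₂.inner x y).re = c * (p₁.inner x y).re := by
      intro x y
      have e1 := core_expand_add_re p₁ x y
      have e2 := core_expand_add_re p₂ x y
      have n1 := hnorm (x + y)
      have n2 := hnorm x
      have n3 := hnorm y
      rw [e1, e2, n2, n3] at n1
      linarith
    have him : ∀ (p : InnerProductSpace.Core ℂ V) (x y : V),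
        (p.inner x (Complex.I • y)).re = -(p.inner x y).im := by
      intro p x y
      rw [core_smul_right]
      simp [Complex.mul_re]
    refine ⟨c, hc, fun x y => ?_⟩
    apply Complex.ext
    · rw [hre x y, core_re_ofReal_mul]
    · have h1 := hre x (Complex.I • y)
      rw [him, him] at h1
      simp only [Complex.mul_im, Complex.ofReal_re, Complex.ofReal_im, zero_mul, add_zero]
      linarith
end

section
/- Let V be a complex vector space equipped with two inner products ⟨·,·⟩₁ and ⟨·,·⟩₂, and fix θ₀ ∈ (0,π). Suppose the two inner products define the same θ₀ angle, i.e., for all nonzero x, y ∈ V, Re⟨x,y⟩₁ = cos(θ₀)·‖x‖₁‖y‖₁ if and only if Re⟨x,y⟩₂ = cos(θ₀)·‖x‖₂‖y‖₂. Then there exists a constant c > 0 such that ⟨x,y⟩₂ = c·⟨x,y⟩₁ for all x, y ∈ V. -/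
section Aux
variable {V : Type*} [AddCommGroup V] [Module ℂ V] (p : InnerProductSpace.Core ℂ V)

lemma aux_symm_re (x y : V) : (p.inner x y).re = (p.inner y x).re := by
  rw [← p.conj_inner_symm y x]; simp

lemma aux_smul_left_re (r : ℝ) (x y : V) :
    (p.inner ((r : ℂ) • x) y).re = r * (p.inner x y).re := by
  rw [p.smul_left]; simp

lemma aux_add_left_re (x y z : V) :
    (p.inner (x + y) z).re = (p.inner x z).re + (p.inner y z).re := by
  rw [p.add_left]; simp

lemma aux_smul_right_re (r : ℝ) (x y : V) :
    (p.inner x ((r : ℂ) • y)).re = r * (p.inner x y).re := by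
  rw [aux_symm_re, aux_smul_left_re, aux_symm_re]

lemma aux_add_right_re (x y z : V) :
    (p.inner x (y + z)).re = (p.inner x y).re + (p.inner x z).re := by
  rw [aux_symm_re, aux_add_left_re, aux_symm_re p y x, aux_symm_re p z x]

lemma aux_inner_zero_left (y : V) : p.inner 0 y = 0 := by
  rw [show (0:V) = (0:ℂ) • (0:V) by simp, p.smul_left]; simp

lemma aux_inner_zero_right (x : V) : p.inner x 0 = 0 := by
  rw [← p.conj_inner_symm, aux_inner_zero_left]; simp

lemma aux_q_nonneg (x : V) : 0 ≤ (p.inner x x).re := p.re_inner_nonneg x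

lemma aux_q_pos {x : V} (hx : x ≠ 0) : 0 < (p.inner x x).re := by
  rcases lt_or_eq_of_le (p.re_inner_nonneg x) with h | h
  · exact h
  · exfalso
    apply hx
    apply p.definite
    have him : (p.inner x x).im = 0 := by
      have := p.conj_inner_symm x x
      have h2 := congrArg Complex.im this
      simp at h2
      linarith
    have h' : (p.inner x x).re = 0 := by simpa using h.symm
    apply Complex.ext <;> simp [h', him]

lemma aux_ne_zero {x : V} (hq : (p.inner x x).re ≠ 0) : x ≠ 0 := by
  intro h0; subst h0; rw [aux_inner_zero_left] at hq; simp at hq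

/-- expansion of the quadratic form on a real combination -/
lemma aux_expand_right (a b : ℝ) (x y z : V) :
    (p.inner z ((a:ℂ) • x + (b:ℂ) • y)).re
      = a * (p.inner z x).re + b * (p.inner z y).re := by
  rw [aux_add_right_re, aux_smul_right_re, aux_smul_right_re]

lemma aux_q_expand (a b : ℝ) (x y : V) :
    (p.inner ((a:ℂ) • x + (b:ℂ) • y) ((a:ℂ) • x + (b:ℂ) • y)).re
      = a^2 * (p.inner x x).re + 2*a*b*(p.inner x y).re + b^2 * (p.inner y y).re := by
  rw [aux_add_left_re, aux_smul_left_re, aux_smul_left_re, aux_expand_right, aux_expand_right,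
    aux_symm_re p y x]
  ring

end Aux

section Aux2
variable {V : Type*} [AddCommGroup V] [Module ℂ V] (p : InnerProductSpace.Core ℂ V)

lemma aux_smul_right (r : ℂ) (x y : V) : p.inner x (r • y) = r * p.inner x y := by
  rw [← p.conj_inner_symm, p.smul_left, map_mul, RingHomCompTriple.comp_apply, RingHom.id_apply,
    p.conj_inner_symm]

end Aux2

set_option maxHeartbeats 1600000 in
theorem stmt_14' {V : Type*} [AddCommGroup V] [Module ℂ V]
    (p₁ p₂ : InnerProductSpace.Core ℂ V) (θ₀ : ℝ)
    (hθ₀ : θ₀ ∈ Set.Ioo 0 Real.pi)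
    (h : ∀ x y : V, x ≠ 0 → y ≠ 0 →
      ((p₁.inner x y).re =
        Real.cos θ₀ * (Real.sqrt (p₁.inner x x).re * Real.sqrt (p₁.inner y y).re) ↔
       (p₂.inner x y).re =
        Real.cos θ₀ * (Real.sqrt (p₂.inner x x).re * Real.sqrt (p₂.inner y y).re))) :
    ∃ c : ℝ, 0 < c ∧ ∀ x y : V, p₂.inner x y = (c : ℂ) * p₁.inner x y := by
  obtain ⟨hθa, hθb⟩ := hθ₀
  set k := Real.cos θ₀ with hkdef
  have hk1 : k < 1 := by
    have := Real.cos_lt_cos_of_nonneg_of_le_pi le_rfl hθb.le hθa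
    simpa using this
  have hk2 : (-1 : ℝ) < k := by
    have := Real.cos_lt_cos_of_nonneg_of_le_pi hθa.le le_rfl hθb
    simpa using this
  have hkk : 0 < 1 - k ^ 2 := by nlinarith
  -- Step A: orthogonality transfers from p₁ to p₂
  have ortho : ∀ x y : V, x ≠ 0 → y ≠ 0 → (p₁.inner x y).re = 0 →
      (p₂.inner x y).re = 0 := by
    intro x y hx hy hxy
    by_cases hk0 : k = 0
    · have hiff := h x y hx hy
      rw [hk0] at hiff
      simp only [zero_mul] at hiff
      exact hiff.mp hxy
    · have hqx : 0 < (p₁.inner x x).re := aux_q_pos p₁ hx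
      have hqy : 0 < (p₁.inner y y).re := aux_q_pos p₁ hy
      set nx := Real.sqrt (p₁.inner x x).re with hnxdef
      set ny := Real.sqrt (p₁.inner y y).re with hnydef
      have hnx : 0 < nx := Real.sqrt_pos.mpr hqx
      have hny : 0 < ny := Real.sqrt_pos.mpr hqy
      have hnx2 : nx ^ 2 = (p₁.inner x x).re := Real.sq_sqrt hqx.le
      have hny2 : ny ^ 2 = (p₁.inner y y).re := Real.sq_sqrt hqy.le
      set x' : V := ((nx⁻¹ : ℝ) : ℂ) • x with hx'def
      set y' : V := ((ny⁻¹ : ℝ) : ℂ) • y with hy'def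
      have hqx' : (p₁.inner x' x').re = 1 := by
        rw [hx'def, aux_smul_left_re, aux_smul_right_re]
        field_simp
        nlinarith [hnx2]
      have hqy' : (p₁.inner y' y').re = 1 := by
        rw [hy'def, aux_smul_left_re, aux_smul_right_re]
        field_simp
        nlinarith [hny2]
      have hB' : (p₁.inner x' y').re = 0 := by
        rw [hx'def, hy'def, aux_smul_left_re, aux_smul_right_re, hxy]
        ring
      have hx'0 : x' ≠ 0 := aux_ne_zero p₁ (by rw [hqx']; exact one_ne_zero)
      set s := Real.sqrt (1 - k ^ 2) with hsdef
      have hs : 0 < s := Real.sqrt_pos.mpr hkk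
      have hs2 : s ^ 2 = 1 - k ^ 2 := Real.sq_sqrt hkk.le
      set P := (p₂.inner x' x').re with hPdef
      set A := (p₂.inner x' y').re with hAdef
      set R := (p₂.inner y' y').re with hRdef
      have key : ∀ ε : ℝ, ε = 1 ∨ ε = -1 →
          (k * P + ε * s * A) ^ 2
            = k ^ 2 * (P * (k ^ 2 * P + 2 * k * (ε * s) * A + (ε * s) ^ 2 * R)) := by
        intro ε hε
        set v : V := ((k : ℝ) : ℂ) • x' + ((ε * s : ℝ) : ℂ) • y' with hvdef
        have hqv : (p₁.inner v v).re = 1 := by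
          rw [hvdef, aux_q_expand, hqx', hqy', hB']
          rcases hε with rfl | rfl <;> nlinarith [hs2]
        have hv : v ≠ 0 := aux_ne_zero p₁ (by rw [hqv]; exact one_ne_zero)
        have hBxv : (p₁.inner x' v).re = k := by
          rw [hvdef, aux_expand_right, hqx', hB']
          ring
        have hcond2 := (h x' v hx'0 hv).mp
          (by rw [hBxv, hqx', hqv, Real.sqrt_one]; ring)
        have hsq : ((p₂.inner x' v).re) ^ 2
            = k ^ 2 * ((p₂.inner x' x').re * (p₂.inner v v).re) := by
          rw [hcond2, mul_pow, mul_pow, Real.sq_sqrt (aux_q_nonneg p₂ x'),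
            Real.sq_sqrt (aux_q_nonneg p₂ v)]
        have hPe : (p₂.inner x' v).re = k * P + ε * s * A := by
          rw [hvdef, aux_expand_right]
        have hZe : (p₂.inner v v).re
            = k ^ 2 * P + 2 * k * (ε * s) * A + (ε * s) ^ 2 * R := by
          rw [hvdef, aux_q_expand]
        rw [hPe, hZe] at hsq
        exact hsq
      have k1 := key 1 (Or.inl rfl)
      have k2 := key (-1) (Or.inr rfl)
      have hP : 0 < P := aux_q_pos p₂ hx'0
      have h4 : (k * s * P * (1 - k ^ 2)) * A = 0 := by linear_combination (k1 - k2) / 4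
      have hne : k * s * P * (1 - k ^ 2) ≠ 0 :=
        mul_ne_zero (mul_ne_zero (mul_ne_zero hk0 hs.ne') hP.ne') hkk.ne'
      have hA : A = 0 := by
        rcases mul_eq_zero.mp h4 with h' | h'
        · exact absurd h' hne
        · exact h'
      rw [hAdef, hx'def, hy'def, aux_smul_left_re, aux_smul_right_re] at hA
      have : (p₂.inner x y).re = nx * ny * (nx⁻¹ * (ny⁻¹ * (p₂.inner x y).re)) := by
        field_simp
      rw [this, hA, mul_zero]
  -- Step B: B₂(x,y) q₁(x) = B₁(x,y) q₂(x) for x,y ≠ 0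
  have ratio : ∀ x y : V, x ≠ 0 → y ≠ 0 →
      (p₂.inner x y).re * (p₁.inner x x).re
        = (p₁.inner x y).re * (p₂.inner x x).re := by
    intro x y hx hy
    have hqx : 0 < (p₁.inner x x).re := aux_q_pos p₁ hx
    set t : ℝ := (p₁.inner x y).re / (p₁.inner x x).re with htdef
    have ht : t * (p₁.inner x x).re = (p₁.inner x y).re := by
      rw [htdef]; field_simp
    set u : V := y + ((-t : ℝ) : ℂ) • x with hudef
    have hB1u : (p₁.inner x u).re = 0 := by
      rw [hudef, aux_add_right_re, aux_smul_right_re]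
      linarith [ht]
    by_cases hu : u = 0
    · have hy' : y = ((t : ℝ) : ℂ) • x := by
        have : y + ((-t : ℝ) : ℂ) • x = 0 := by rw [← hudef, hu]
        have h2 := congrArg (fun z => z + ((t : ℝ) : ℂ) • x) this
        simp only [zero_add] at h2
        rw [← h2]
        push_cast
        module
      rw [hy', aux_smul_right_re, aux_smul_right_re]
      ring
    · have hB2u : (p₂.inner x u).re = 0 := ortho x u hx hu hB1u
      rw [hudef, aux_add_right_re, aux_smul_right_re] at hB2u
      have h5 : (p₂.inner x y).re = t * (p₂.inner x x).re := by linarith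
      rw [h5, ← ht]; ring
  -- ratios of quadratic forms agree on pairs connected by a nonzero B₁
  have link : ∀ x y : V, x ≠ 0 → y ≠ 0 → (p₁.inner x y).re ≠ 0 →
      (p₂.inner x x).re * (p₁.inner y y).re
        = (p₁.inner x x).re * (p₂.inner y y).re := by
    intro x y hx hy hB
    have r1 := ratio x y hx hy
    have r2 := ratio y x hy hx
    rw [aux_symm_re p₂ y x, aux_symm_re p₁ y x] at r2
    -- r1 : B₂ * q₁x = B₁ * q₂x ; r2 : B₂ * q₁y = B₁ * q₂y
    have e1 := congrArg (fun z => z * (p₁.inner y y).re) r1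
    have e2 := congrArg (fun z => z * (p₁.inner x x).re) r2
    have : (p₁.inner x y).re * ((p₂.inner x x).re * (p₁.inner y y).re
        - (p₁.inner x x).re * (p₂.inner y y).re) = 0 := by
      linear_combination e2 - e1
    rcases mul_eq_zero.mp this with h' | h'
    · exact absurd h' hB
    · linarith
  -- Step C: the quadratic forms are proportional
  have qprop : ∀ x y : V, x ≠ 0 → y ≠ 0 →
      (p₂.inner x x).re * (p₁.inner y y).re
        = (p₁.inner x x).re * (p₂.inner y y).re := by
    intro x y hx hy
    by_cases hB : (p₁.inner x y).re ≠ 0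
    · exact link x y hx hy hB
    · push_neg at hB
      have hqx : 0 < (p₁.inner x x).re := aux_q_pos p₁ hx
      have hqy : 0 < (p₁.inner y y).re := aux_q_pos p₁ hy
      set z : V := x + y with hzdef
      have hz : z ≠ 0 := by
        intro h0
        have : y = ((-1 : ℝ) : ℂ) • x := by
          have h2 := congrArg (fun w => w - x) h0
          simp only [hzdef] at h2
          rw [show x + y - x = y by abel] at h2
          rw [h2]; push_cast; module
        rw [this, aux_smul_right_re] at hB
        nlinarith
      have hBxz : (p₁.inner x z).re ≠ 0 := by
        rw [hzdef, aux_add_right_re, hB]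
        simpa using hqx.ne'
      have hByz : (p₁.inner y z).re ≠ 0 := by
        rw [hzdef, aux_add_right_re, aux_symm_re p₁ y x, hB]
        simpa using hqy.ne'
      have hqz : 0 < (p₁.inner z z).re := aux_q_pos p₁ hz
      have l1 := link x z hx hz hBxz
      have l2 := link y z hy hz hByz
      have e1 := congrArg (fun w => w * (p₁.inner y y).re) l1
      have e2 := congrArg (fun w => w * (p₁.inner x x).re) l2
      have : (p₁.inner z z).re * ((p₂.inner x x).re * (p₁.inner y y).re
          - (p₁.inner x x).re * (p₂.inner y y).re) = 0 := by
        linear_combination e1 - e2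
      rcases mul_eq_zero.mp this with h' | h'
      · exact absurd h' hqz.ne'
      · linarith
  -- Step D: conclude
  by_cases hV : ∀ v : V, v = 0
  · refine ⟨1, one_pos, fun x y => ?_⟩
    rw [hV x, aux_inner_zero_left, aux_inner_zero_left, mul_zero]
  · push_neg at hV
    obtain ⟨x₀, hx₀⟩ := hV
    have hq10 : 0 < (p₁.inner x₀ x₀).re := aux_q_pos p₁ hx₀
    have hq20 : 0 < (p₂.inner x₀ x₀).re := aux_q_pos p₂ hx₀
    set c : ℝ := (p₂.inner x₀ x₀).re / (p₁.inner x₀ x₀).re with hcdef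
    have hc : 0 < c := div_pos hq20 hq10
    have Bre : ∀ x y : V, (p₂.inner x y).re = c * (p₁.inner x y).re := by
      intro x y
      by_cases hx : x = 0
      · rw [hx, aux_inner_zero_left, aux_inner_zero_left]; simp
      by_cases hy : y = 0
      · rw [hy, aux_inner_zero_right, aux_inner_zero_right]; simp
      have hqx : 0 < (p₁.inner x x).re := aux_q_pos p₁ hx
      have h1 := ratio x y hx hy
      have h2 := qprop x x₀ hx hx₀
      have hq2x : (p₂.inner x x).re = c * (p₁.inner x x).re := by
        rw [hcdef]
        field_simp
        linear_combination h2
      rw [hq2x] at h1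
      have := mul_right_cancel₀ hqx.ne'
        (show (p₂.inner x y).re * (p₁.inner x x).re
          = (c * (p₁.inner x y).re) * (p₁.inner x x).re by linarith [h1])
      exact this
    refine ⟨c, hc, fun x y => ?_⟩
    have him : (p₂.inner x y).im = c * (p₁.inner x y).im := by
      have e1 := Bre x (Complex.I • y)
      rw [aux_smul_right, aux_smul_right] at e1
      simp only [Complex.mul_re, Complex.I_re, Complex.I_im] at e1
      linarith [e1]
    apply Complex.ext
    · simpa [Complex.mul_re] using Bre x y
    · simp only [Complex.mul_im, Complex.ofReal_re, Complex.ofReal_im]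
      rw [him]; ring

/-- Two complex inner products defining the same `θ₀ ∈ (0, π)` (Euclidean) angle are
conformal. -/
theorem stmt_14 {V : Type*} [AddCommGroup V] [Module ℂ V]
    (p₁ p₂ : InnerProductSpace.Core ℂ V) (θ₀ : ℝ)
    (hθ₀ : θ₀ ∈ Set.Ioo 0 Real.pi)
    (h : ∀ x y : V, x ≠ 0 → y ≠ 0 →
      ((p₁.inner x y).re =
        Real.cos θ₀ * (Real.sqrt (p₁.inner x x).re * Real.sqrt (p₁.inner y y).re) ↔
       (p₂.inner x y).re =
        Real.cos θ₀ * (Real.sqrt (p₂.inner x x).re * Real.sqrt (p₂.inner y y).re))) :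
    ∃ c : ℝ, 0 < c ∧ ∀ x y : V, p₂.inner x y = (c : ℂ) * p₁.inner x y := by
  exact stmt_14' p₁ p₂ θ₀ hθ₀ h
end
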